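/- Consider the robust one-bit compressed sensing link function f(z) = 2·P(z + ε > 0) − 1 where ε ~ N(0, σ²) with σ > 0. Then μ₁ ≥ √(2/π)·(1/σ)·(σ²/(1 + σ²))^{3/2}, and consequently φ(f) = μ₁² ≥ (2/π)·σ⁴/(1 + σ²)³ > 0 for every σ > 0. -/

import Mathlib

open MeasureTheory ProbabilityTheory Real Set Filter Topology
open scoped NNReal ENNReal

/-- The Gaussian moments `μ_k = E[f(Z) Z^k]` for `Z ~ N(0,1)`. -/
noncomputable def gaussMoment (f : ℝ → ℝ) (k : ℕ) : ℝ :=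
  ∫ z, f z * z ^ k ∂(gaussianReal 0 1)

/-- `φ(f) = μ₁² − μ₀μ₂ + μ₀²`. -/
noncomputable def phiFun (f : ℝ → ℝ) : ℝ :=
  gaussMoment f 1 ^ 2 - gaussMoment f 0 * gaussMoment f 2 + gaussMoment f 0 ^ 2


-- integral against gaussianReal as Lebesgue integral with density
lemma integral_gaussianReal_eq {v : ℝ≥0} (hv : v ≠ 0) (g : ℝ → ℝ) :
    ∫ x, g x ∂(gaussianReal 0 v) = ∫ x, gaussianPDFReal 0 v x * g x := by
  rw [gaussianReal_of_var_ne_zero _ hv]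
  have h : gaussianPDF 0 v = fun x => ((Real.toNNReal (gaussianPDFReal 0 v x) : ℝ≥0) : ℝ≥0∞) := by
    ext x; rfl
  rw [h, integral_withDensity_eq_integral_smul
    ((measurable_gaussianPDFReal 0 v).real_toNNReal) g]
  congr 1; ext x
  rw [NNReal.smul_def, smul_eq_mul, Real.coe_toNNReal _ (gaussianPDFReal_nonneg 0 v x)]

-- pdf continuous
lemma continuous_gaussianPDFReal (μ : ℝ) (v : ℝ≥0) : Continuous (gaussianPDFReal μ v) := by
  unfold gaussianPDFReal
  fun_prop

-- cdf and derivative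
lemma hasDerivAt_cdf {v : ℝ≥0} (hv : v ≠ 0) (z : ℝ) :
    HasDerivAt (fun t => ((gaussianReal 0 v) (Set.Iic t)).toReal) (gaussianPDFReal 0 v z) z := by
  have hint : Integrable (gaussianPDFReal 0 v) := integrable_gaussianPDFReal 0 v
  have key : ∀ t, ((gaussianReal 0 v) (Set.Iic t)).toReal
      = (∫ x in Set.Iic (0:ℝ), gaussianPDFReal 0 v x) + ∫ x in (0:ℝ)..t, gaussianPDFReal 0 v x := by
    intro t
    rw [gaussianReal_apply_eq_integral 0 hv, ENNReal.toReal_ofReal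
      (setIntegral_nonneg measurableSet_Iic fun x _ => gaussianPDFReal_nonneg 0 v x)]
    rw [← intervalIntegral.integral_Iic_sub_Iic hint.integrableOn hint.integrableOn]
    ring
  have : HasDerivAt (fun t => (∫ x in Set.Iic (0:ℝ), gaussianPDFReal 0 v x)
      + ∫ x in (0:ℝ)..t, gaussianPDFReal 0 v x) (gaussianPDFReal 0 v z) z := by
    refine HasDerivAt.const_add _ ?_
    exact intervalIntegral.integral_hasDerivAt_right (hint.intervalIntegrable)
      (hint.aestronglyMeasurable.stronglyMeasurableAtFilter)
      (continuous_gaussianPDFReal 0 v).continuousAt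
  exact this.congr_of_eventuallyEq (Filter.Eventually.of_forall fun t => key t)

lemma gaussianPDFReal_even (v : ℝ≥0) (x : ℝ) :
    gaussianPDFReal 0 v (-x) = gaussianPDFReal 0 v x := by
  simp [gaussianPDFReal, neg_sq]

lemma gaussianReal_singleton {v : ℝ≥0} (hv : v ≠ 0) (a : ℝ) :
    (gaussianReal 0 v) {a} = 0 :=
  gaussianReal_absolutelyContinuous 0 hv (measure_singleton a)

lemma gaussianReal_Ioi_toReal {v : ℝ≥0} (hv : v ≠ 0) (t : ℝ) :
    ((gaussianReal 0 v) (Set.Ioi t)).toReal = 1 - ((gaussianReal 0 v) (Set.Iic t)).toReal := by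
  have h := prob_add_prob_compl (μ := gaussianReal 0 v) (measurableSet_Iic (a := t))
  rw [Set.compl_Iic] at h
  have h1 : ((gaussianReal 0 v) (Set.Iic t)) ≠ ⊤ := measure_ne_top _ _
  have h2 : ((gaussianReal 0 v) (Set.Ioi t)) ≠ ⊤ := measure_ne_top _ _
  have := congrArg ENNReal.toReal h
  rw [ENNReal.toReal_add h1 h2] at this
  simp at this
  linarith

lemma hasDerivAt_F {v : ℝ≥0} (hv : v ≠ 0) (z : ℝ) :
    HasDerivAt (fun z => ((gaussianReal 0 v) (Set.Ioi (-z))).toReal)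
      (gaussianPDFReal 0 v z) z := by
  have h1 : HasDerivAt (fun z : ℝ => ((gaussianReal 0 v) (Set.Iic (-z))).toReal)
      (-gaussianPDFReal 0 v z) z := by
    have := (hasDerivAt_cdf hv (-z)).comp z (hasDerivAt_neg z)
    exact this.congr_deriv (by rw [gaussianPDFReal_even]; ring)
  have h2 : HasDerivAt (fun z : ℝ => 1 - ((gaussianReal 0 v) (Set.Iic (-z))).toReal)
      (gaussianPDFReal 0 v z) z := by
    exact ((hasDerivAt_const z (1:ℝ)).sub h1).congr_deriv (by ring)
  exact h2.congr_of_eventuallyEq (Filter.Eventually.of_forall fun t =>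
    gaussianReal_Ioi_toReal hv (-t))

lemma gaussianReal_neg_symm {v : ℝ≥0} (hv : v ≠ 0) (t : ℝ) :
    (gaussianReal 0 v) (Set.Ioi t) = (gaussianReal 0 v) (Set.Iic (-t)) := by
  have hmap : (gaussianReal 0 v).map (fun x => (-1 : ℝ) * x) = gaussianReal 0 v := by
    rw [gaussianReal_map_const_mul (-1 : ℝ)]
    norm_num
  calc (gaussianReal 0 v) (Set.Ioi t)
      = ((gaussianReal 0 v).map (fun x => (-1 : ℝ) * x)) (Set.Ioi t) := by rw [hmap]
    _ = (gaussianReal 0 v) ((fun x => (-1 : ℝ) * x) ⁻¹' Set.Ioi t) := by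
        exact Measure.map_apply (measurable_const_mul _) measurableSet_Ioi
    _ = (gaussianReal 0 v) (Set.Iio (-t)) := by
        congr 1
        ext x
        simp only [Set.mem_preimage, Set.mem_Ioi, Set.mem_Iio]
        constructor <;> intro h <;> linarith
    _ = (gaussianReal 0 v) (Set.Iic (-t)) :=
        measure_congr (Iio_ae_eq_Iic' (gaussianReal_singleton hv (-t)))

-- bounds on F
lemma F_bounds {v : ℝ≥0} (z : ℝ) :
    ((gaussianReal 0 v) (Set.Ioi (-z))).toReal ∈ Set.Icc (0:ℝ) 1 := by
  constructor
  · exact ENNReal.toReal_nonneg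
  · exact ENNReal.toReal_le_of_le_ofReal zero_le_one (by simpa using prob_le_one)

-- oddness of f
lemma f_odd {v : ℝ≥0} (hv : v ≠ 0) (z : ℝ) :
    (2 * ((gaussianReal 0 v) (Set.Ioi (-(-z)))).toReal - 1)
      = -(2 * ((gaussianReal 0 v) (Set.Ioi (-z))).toReal - 1) := by
  have h1 : (gaussianReal 0 v) (Set.Ioi (-(-z))) = (gaussianReal 0 v) (Set.Iic (-z)) := by
    rw [neg_neg]; exact gaussianReal_neg_symm hv z
  rw [h1]
  have h2 : ((gaussianReal 0 v) (Set.Iic (-z))).toReal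
      = 1 - ((gaussianReal 0 v) (Set.Ioi (-z))).toReal := by
    have := gaussianReal_Ioi_toReal hv (-z)
    linarith
  rw [h2]; ring

-- odd integrals vanish
lemma integral_odd_gaussian (g : ℝ → ℝ) (hg : AEStronglyMeasurable g (gaussianReal 0 1))
    (hodd : ∀ x, g (-x) = - g x) : ∫ x, g x ∂(gaussianReal 0 1) = 0 := by
  have hmap : (gaussianReal 0 1).map (fun x => (-1 : ℝ) * x) = gaussianReal 0 1 := by
    rw [gaussianReal_map_const_mul (-1 : ℝ)]
    norm_num
  have h1 : ∫ x, g x ∂(gaussianReal 0 1)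
      = ∫ x, g ((-1 : ℝ) * x) ∂(gaussianReal 0 1) := by
    conv_lhs => rw [← hmap]
    rw [integral_map (measurable_const_mul _).aemeasurable (by rwa [hmap])]
  have h2 : ∫ x, g ((-1 : ℝ) * x) ∂(gaussianReal 0 1) = - ∫ x, g x ∂(gaussianReal 0 1) := by
    rw [← integral_neg]
    congr 1; ext x
    rw [show (-1 : ℝ) * x = -x by ring, hodd]
  linarith [h1, h2]

lemma pdf_one_eq : gaussianPDFReal 0 1 = fun x => (Real.sqrt (2*π))⁻¹ * rexp (-x^2/2) := by
  ext x
  simp [gaussianPDFReal]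

lemma hasDerivAt_pdf_one (z : ℝ) :
    HasDerivAt (gaussianPDFReal 0 1) (-(z * gaussianPDFReal 0 1 z)) z := by
  rw [pdf_one_eq]
  have h1 : HasDerivAt (fun x : ℝ => -x^2/2) (-z) z := by
    have := ((hasDerivAt_pow 2 z).neg).div_const 2
    norm_num at this
    exact this.congr_deriv (by ring)
  have h2 := (h1.exp).const_mul (Real.sqrt (2*π))⁻¹
  exact h2.congr_deriv (by beta_reduce; ring)

lemma pdf_sigma_eq (σ : ℝ) (hσ : 0 < σ) :
    gaussianPDFReal 0 (Real.toNNReal (σ^2))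
      = fun x => (Real.sqrt (2*π*σ^2))⁻¹ * rexp (-x^2/(2*σ^2)) := by
  ext x
  have h : ((Real.toNNReal (σ^2) : ℝ≥0) : ℝ) = σ^2 := Real.coe_toNNReal _ (sq_nonneg σ)
  simp [gaussianPDFReal, h]

lemma toNNReal_sq_ne_zero {σ : ℝ} (hσ : 0 < σ) : Real.toNNReal (σ^2) ≠ 0 := by
  simp only [ne_eq, Real.toNNReal_eq_zero, not_le]
  positivity

lemma tendsto_sq_atTop_atTop : Filter.Tendsto (fun z : ℝ => z^2) Filter.atTop Filter.atTop :=
  tendsto_pow_atTop two_ne_zero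

lemma tendsto_sq_atBot_atTop : Filter.Tendsto (fun z : ℝ => z^2) Filter.atBot Filter.atTop := by
  have h : (fun z : ℝ => z^2) = (fun z : ℝ => (-z)^2) := by funext z; ring
  rw [h]
  exact (tendsto_pow_atTop two_ne_zero).comp tendsto_neg_atBot_atTop

lemma tendsto_pdf_one (l : Filter ℝ) (hl : Filter.Tendsto (fun z : ℝ => z^2) l Filter.atTop) :
    Filter.Tendsto (gaussianPDFReal 0 1) l (nhds 0) := by
  rw [pdf_one_eq]
  have h1 : Filter.Tendsto (fun z : ℝ => -z^2/2) l Filter.atBot := by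
    apply Filter.Tendsto.atBot_div_const (by norm_num : (0:ℝ) < 2)
    exact Filter.tendsto_neg_atBot_iff.mpr hl
  have h2 : Filter.Tendsto (fun z : ℝ => rexp (-z^2/2)) l (nhds 0) :=
    Real.tendsto_exp_atBot.comp h1
  have := h2.const_mul (Real.sqrt (2*π))⁻¹
  simpa using this

lemma gauss_product_integral (σ : ℝ) (hσ : 0 < σ) :
    ∫ z : ℝ, 2 * gaussianPDFReal 0 (Real.toNNReal (σ^2)) z * gaussianPDFReal 0 1 z
      = Real.sqrt (2/π) / Real.sqrt (1 + σ^2) := by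
  have hs : (0:ℝ) < σ^2 := by positivity
  have hb : (0:ℝ) < (1+σ^2)/(2*σ^2) := by positivity
  have hkey : (fun z : ℝ => 2 * gaussianPDFReal 0 (Real.toNNReal (σ^2)) z * gaussianPDFReal 0 1 z)
      = fun z => (2 * (Real.sqrt (2*π*σ^2))⁻¹ * (Real.sqrt (2*π))⁻¹)
          * rexp (-((1+σ^2)/(2*σ^2)) * z^2) := by
    funext z
    rw [pdf_sigma_eq σ hσ, pdf_one_eq]
    rw [show (2:ℝ) * ((Real.sqrt (2*π*σ^2))⁻¹ * rexp (-z^2/(2*σ^2)))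
        * ((Real.sqrt (2*π))⁻¹ * rexp (-z^2/2))
      = (2 * (Real.sqrt (2*π*σ^2))⁻¹ * (Real.sqrt (2*π))⁻¹)
        * (rexp (-z^2/(2*σ^2)) * rexp (-z^2/2)) by ring]
    rw [← Real.exp_add]
    congr 1
    field_simp
    ring
  rw [hkey, MeasureTheory.integral_const_mul, integral_gaussian]
  -- now pure algebra with sqrts
  have h2π : (0:ℝ) < 2*π := by positivity
  have h2πσ : (0:ℝ) < 2*π*σ^2 := by positivity
  have h1σ : (0:ℝ) < 1+σ^2 := by positivity
  have hπ : (0:ℝ) < π := Real.pi_pos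
  have hLnn : 0 ≤ 2 * (Real.sqrt (2*π*σ^2))⁻¹ * (Real.sqrt (2*π))⁻¹
      * Real.sqrt (π / ((1+σ^2)/(2*σ^2))) := by positivity
  have hL : (2 * (Real.sqrt (2*π*σ^2))⁻¹ * (Real.sqrt (2*π))⁻¹
      * Real.sqrt (π / ((1+σ^2)/(2*σ^2))))^2 = (2/π)/(1+σ^2) := by
    have e1 : (Real.sqrt (2*π*σ^2))^2 = 2*π*σ^2 := Real.sq_sqrt h2πσ.le
    have e2 : (Real.sqrt (2*π))^2 = 2*π := Real.sq_sqrt h2π.le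
    have e3 : (Real.sqrt (π / ((1+σ^2)/(2*σ^2))))^2 = π / ((1+σ^2)/(2*σ^2)) :=
      Real.sq_sqrt (by positivity)
    rw [mul_pow, mul_pow, mul_pow, inv_pow, inv_pow, e1, e2, e3]
    field_simp
  have hR : (Real.sqrt (2/π) / Real.sqrt (1+σ^2))^2 = (2/π)/(1+σ^2) := by
    rw [div_pow, Real.sq_sqrt (by positivity : (0:ℝ) ≤ 2/π), Real.sq_sqrt h1σ.le]
  calc 2 * (Real.sqrt (2*π*σ^2))⁻¹ * (Real.sqrt (2*π))⁻¹
        * Real.sqrt (π / ((1+σ^2)/(2*σ^2)))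
      = Real.sqrt ((2 * (Real.sqrt (2*π*σ^2))⁻¹ * (Real.sqrt (2*π))⁻¹
        * Real.sqrt (π / ((1+σ^2)/(2*σ^2))))^2) := (Real.sqrt_sq hLnn).symm
    _ = Real.sqrt ((Real.sqrt (2/π) / Real.sqrt (1+σ^2))^2) := by rw [hL, hR]
    _ = Real.sqrt (2/π) / Real.sqrt (1+σ^2) := Real.sqrt_sq (by positivity)


lemma mu1_eq (σ : ℝ) (hσ : 0 < σ) :
    ∫ z, (2 * ((gaussianReal 0 (Real.toNNReal (σ^2))) (Set.Ioi (-z))).toReal - 1) * z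
      ∂(gaussianReal 0 1) = Real.sqrt (2/π) / Real.sqrt (1 + σ^2) := by
  have hv : Real.toNNReal (σ^2) ≠ 0 := toNNReal_sq_ne_zero hσ
  set v := Real.toNNReal (σ^2) with hv_def
  set f : ℝ → ℝ := fun z => 2 * ((gaussianReal 0 v) (Set.Ioi (-z))).toReal - 1 with hf_def
  have hfd : ∀ z, HasDerivAt f (2 * gaussianPDFReal 0 v z) z := fun z => by
    exact ((hasDerivAt_F hv z).const_mul 2).sub_const 1
  have hfb : ∀ z, ‖f z‖ ≤ 1 := fun z => by
    have h := F_bounds (v := v) z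
    rw [Real.norm_eq_abs, abs_le]
    obtain ⟨h1, h2⟩ := h
    constructor <;> simp only [hf_def] <;> linarith
  have hfc : Continuous f := by
    rw [continuous_iff_continuousAt]; exact fun z => (hfd z).continuousAt
  -- convert to Lebesgue integral
  rw [integral_gaussianReal_eq one_ne_zero]
  -- IBP
  have hW : ∀ z, HasDerivAt (fun z => f z * (-(gaussianPDFReal 0 1 z)))
      ((2 * gaussianPDFReal 0 v z) * (-(gaussianPDFReal 0 1 z))
        + f z * (z * gaussianPDFReal 0 1 z)) z := fun z => by
    have := (hfd z).mul ((hasDerivAt_pdf_one z).neg)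
    exact this.congr_deriv (by simp only [Pi.neg_apply]; ring)
  have hpdfσ_bdd : ∀ x, ‖2 * gaussianPDFReal 0 v x‖ ≤ 2 * (Real.sqrt (2*π*σ^2))⁻¹ := by
    intro x
    rw [Real.norm_eq_abs, abs_of_nonneg (by have := gaussianPDFReal_nonneg 0 v x; linarith),
      hv_def, pdf_sigma_eq σ hσ]
    have h1 : rexp (-x^2/(2*σ^2)) ≤ 1 := by
      rw [Real.exp_le_one_iff]
      exact div_nonpos_of_nonpos_of_nonneg (by nlinarith [sq_nonneg x]) (by positivity)
    have h2 : (0:ℝ) ≤ (Real.sqrt (2*π*σ^2))⁻¹ := by positivity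
    calc 2 * ((Real.sqrt (2*π*σ^2))⁻¹ * rexp (-x^2/(2*σ^2)))
        ≤ 2 * ((Real.sqrt (2*π*σ^2))⁻¹ * 1) := by
          apply mul_le_mul_of_nonneg_left _ (by norm_num)
          exact mul_le_mul_of_nonneg_left h1 h2
      _ = 2 * (Real.sqrt (2*π*σ^2))⁻¹ := by ring
  have hint1 : Integrable (fun z => (2 * gaussianPDFReal 0 v z) * (-(gaussianPDFReal 0 1 z))) :=
    Integrable.bdd_mul (integrable_gaussianPDFReal 0 1).neg
      (((measurable_gaussianPDFReal 0 v).const_mul 2).aestronglyMeasurable)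
      (Filter.Eventually.of_forall hpdfσ_bdd)
  have hintzp : Integrable (fun z : ℝ => z * gaussianPDFReal 0 1 z) := by
    have h : (fun z : ℝ => z * gaussianPDFReal 0 1 z)
        = fun z => (Real.sqrt (2*π))⁻¹ * (z * rexp (-(1/2 : ℝ) * z^2)) := by
      funext z
      rw [pdf_one_eq]
      rw [show -(1/2 : ℝ) * z^2 = -z^2/2 by ring]
      ring
    rw [h]
    exact (integrable_mul_exp_neg_mul_sq (by norm_num : (0:ℝ) < 1/2)).const_mul _
  have hint2 : Integrable (fun z => f z * (z * gaussianPDFReal 0 1 z)) :=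
    Integrable.bdd_mul hintzp hfc.aestronglyMeasurable (Filter.Eventually.of_forall hfb)
  have hlim : ∀ l : Filter ℝ, Filter.Tendsto (fun z : ℝ => z^2) l Filter.atTop
      → Filter.Tendsto (fun z => f z * (-(gaussianPDFReal 0 1 z))) l (nhds 0) := by
    intro l hl
    refine squeeze_zero_norm (fun z => ?_) (tendsto_pdf_one l hl)
    rw [norm_mul, norm_neg]
    calc ‖f z‖ * ‖gaussianPDFReal 0 1 z‖ ≤ 1 * ‖gaussianPDFReal 0 1 z‖ :=
          mul_le_mul_of_nonneg_right (hfb z) (norm_nonneg _)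
      _ = gaussianPDFReal 0 1 z := by
          rw [one_mul, Real.norm_eq_abs, abs_of_nonneg (gaussianPDFReal_nonneg 0 1 z)]
  have hibp := integral_of_hasDerivAt_of_tendsto hW (hint1.add hint2)
    (hlim _ tendsto_sq_atBot_atTop) (hlim _ tendsto_sq_atTop_atTop)
  rw [integral_add hint1 hint2] at hibp
  have hneg : ∫ z, (2 * gaussianPDFReal 0 v z) * (-(gaussianPDFReal 0 1 z))
      = -∫ z : ℝ, 2 * gaussianPDFReal 0 v z * gaussianPDFReal 0 1 z := by
    rw [← integral_neg]
    congr 1; funext z; ring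
  rw [hneg] at hibp
  have hmain : ∫ z, f z * (z * gaussianPDFReal 0 1 z)
      = ∫ z : ℝ, 2 * gaussianPDFReal 0 v z * gaussianPDFReal 0 1 z := by linarith
  calc ∫ x, gaussianPDFReal 0 1 x * (f x * x)
      = ∫ z, f z * (z * gaussianPDFReal 0 1 z) := by congr 1; funext z; ring
    _ = ∫ z : ℝ, 2 * gaussianPDFReal 0 v z * gaussianPDFReal 0 1 z := hmain
    _ = Real.sqrt (2/π) / Real.sqrt (1 + σ^2) := gauss_product_integral σ hσ

/-- For the robust one-bit compressed sensing link function
`f(z) = 2·P(z + ε > 0) − 1` with `ε ~ N(0, σ²)`, `σ > 0`: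
`μ₁ ≥ √(2/π)·(1/σ)·(σ²/(1+σ²))^{3/2}`, and consequently
`φ(f) = μ₁² ≥ (2/π)·σ⁴/(1+σ²)³ > 0` for every `σ > 0`. -/
theorem robust_one_bit_cs_phi_all_noise (σ : ℝ) (hσ : 0 < σ) (f : ℝ → ℝ)
    (hf : f = fun z =>
      2 * ((gaussianReal 0 (Real.toNNReal (σ ^ 2))) {u : ℝ | 0 < z + u}).toReal - 1) :
    Real.sqrt (2 / Real.pi) * (1 / σ) * (σ ^ 2 / (1 + σ ^ 2)) ^ ((3 : ℝ) / 2)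
        ≤ gaussMoment f 1 ∧
    phiFun f = gaussMoment f 1 ^ 2 ∧
    (2 / Real.pi) * σ ^ 4 / (1 + σ ^ 2) ^ 3 ≤ phiFun f ∧
    0 < phiFun f := by
  have hv : Real.toNNReal (σ^2) ≠ 0 := toNNReal_sq_ne_zero hσ
  have hf2 : f = fun z =>
      2 * ((gaussianReal 0 (Real.toNNReal (σ ^ 2))) (Set.Ioi (-z))).toReal - 1 := by
    have hsets : ∀ z : ℝ, {u : ℝ | 0 < z + u} = Set.Ioi (-z) := by
      intro z
      ext u
      simp only [Set.mem_setOf_eq, Set.mem_Ioi]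
      constructor <;> intro <;> linarith
    rw [hf]
    funext z
    rw [hsets z]
  have h1σ : (0:ℝ) < 1 + σ^2 := by positivity
  -- μ₁ value
  have hμ1 : gaussMoment f 1 = Real.sqrt (2/π) / Real.sqrt (1 + σ^2) := by
    rw [gaussMoment, hf2]
    simp only [pow_one]
    exact mu1_eq σ hσ
  -- μ₀ = 0
  have hfc : Continuous f := by
    rw [hf2, continuous_iff_continuousAt]
    intro z
    exact (((hasDerivAt_F hv z).const_mul 2).sub_const 1).continuousAt
  have hμ0 : gaussMoment f 0 = 0 := by
    rw [gaussMoment]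
    simp only [pow_zero, mul_one]
    apply integral_odd_gaussian f hfc.aestronglyMeasurable
    intro x
    rw [hf2]
    exact f_odd hv x
  have hphi : phiFun f = gaussMoment f 1 ^ 2 := by
    rw [phiFun, hμ0]; ring
  -- K properties
  have hKpos : 0 < Real.sqrt (2/π) / Real.sqrt (1 + σ^2) := by
    have : (0:ℝ) < 2/π := by positivity
    positivity
  have hK2 : (Real.sqrt (2/π) / Real.sqrt (1 + σ^2))^2 = (2/π)/(1+σ^2) := by
    rw [div_pow, Real.sq_sqrt (by positivity : (0:ℝ) ≤ 2/π), Real.sq_sqrt h1σ.le]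
  -- first inequality
  have hApos : (0:ℝ) < σ^2/(1+σ^2) := by positivity
  have h32 : (σ^2/(1+σ^2) : ℝ) ^ ((3:ℝ)/2)
      = (σ^2/(1+σ^2)) * Real.sqrt (σ^2/(1+σ^2)) := by
    rw [show (3:ℝ)/2 = 1 + 1/2 by norm_num, Real.rpow_add hApos, Real.rpow_one,
      ← Real.sqrt_eq_rpow]
  have hss : Real.sqrt (σ^2/(1+σ^2)) = σ / Real.sqrt (1+σ^2) := by
    rw [Real.sqrt_div (sq_nonneg σ), Real.sqrt_sq hσ.le]
  have hineq1 : Real.sqrt (2 / Real.pi) * (1 / σ) * (σ ^ 2 / (1 + σ ^ 2)) ^ ((3 : ℝ) / 2)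
      ≤ gaussMoment f 1 := by
    rw [hμ1, h32, hss]
    have hs1 : (0:ℝ) < Real.sqrt (1+σ^2) := Real.sqrt_pos.mpr h1σ
    rw [show Real.sqrt (2/π) * (1/σ) * (σ^2/(1+σ^2) * (σ / Real.sqrt (1+σ^2)))
        = Real.sqrt (2/π) * (σ^2/(1+σ^2)) / Real.sqrt (1+σ^2) by field_simp]
    have hA1 : σ^2/(1+σ^2) ≤ 1 := by
      rw [div_le_one h1σ]; nlinarith
    calc Real.sqrt (2/π) * (σ^2/(1+σ^2)) / Real.sqrt (1+σ^2)
        ≤ Real.sqrt (2/π) * 1 / Real.sqrt (1+σ^2) := by gcongr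
      _ = Real.sqrt (2/π) / Real.sqrt (1+σ^2) := by rw [mul_one]
  -- second inequality
  have hineq2 : (2 / Real.pi) * σ ^ 4 / (1 + σ ^ 2) ^ 3 ≤ phiFun f := by
    rw [hphi, hμ1, hK2]
    rw [div_le_div_iff₀ (by positivity) h1σ]
    have hπ : (0:ℝ) < π := Real.pi_pos
    have hpoly : σ^4 * (1+σ^2) ≤ (1+σ^2)^3 := by nlinarith [sq_nonneg σ, sq_nonneg (σ^2)]
    have hc : (0:ℝ) ≤ 2/π := by positivity
    calc 2/π * σ^4 * (1+σ^2) = (2/π) * (σ^4 * (1+σ^2)) := by ring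
      _ ≤ (2/π) * (1+σ^2)^3 := mul_le_mul_of_nonneg_left hpoly hc
      _ = 2/π * (1+σ^2)^3 := by ring
  have hpos : 0 < phiFun f := by
    rw [hphi, hμ1]
    positivity
  exact ⟨hineq1, hphi, hineq2, hpos⟩
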